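/- Suppose m : ℝ × ℝⁿ → ℝ is C¹ with nonvanishing partial derivative in the first variable, and suppose there exist functions f₁, …, fₙ (each differentiable and nonvanishing on the range of m) such that ∂m/∂yᵢ(x, y) = fᵢ(m(x, y)) for all (x, y) and all i. Then there exist constants c_{ij} ≠ 0 with fᵢ = c_{ij}·fⱼ on the range of m, for all i, j. -/

import Mathlib

/-- Partial derivative of `m : ℝ × (Fin n → ℝ) → ℝ` in the first (`x`) variable. -/
noncomputable def pdx {n : ℕ} (m : ℝ × (Fin n → ℝ) → ℝ) (x : ℝ) (y : Fin n → ℝ) : ℝ :=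
  deriv (fun t => m (t, y)) x

/-- Partial derivative of `m : ℝ × (Fin n → ℝ) → ℝ` in the `i`-th `y` variable. -/
noncomputable def pdy {n : ℕ} (i : Fin n) (m : ℝ × (Fin n → ℝ) → ℝ)
    (x : ℝ) (y : Fin n → ℝ) : ℝ :=
  deriv (fun t => m (x, Function.update y i t)) (y i)

/-- Key slice-derivative lemma: the function `t ↦ m (x, update w k t)` has derivative
`f k (m (x, update w k s))` at any point `s`. -/
lemma sliceDeriv {n : ℕ} (m : ℝ × (Fin n → ℝ) → ℝ) (f : Fin n → ℝ → ℝ)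
    (hm : ContDiff ℝ 1 m)
    (heq : ∀ (i : Fin n) x y, pdy i m x y = f i (m (x, y)))
    (k : Fin n) (x : ℝ) (w : Fin n → ℝ) (s : ℝ) :
    HasDerivAt (fun t => m (x, Function.update w k t)) (f k (m (x, Function.update w k s))) s := by
  have hdm : Differentiable ℝ m := hm.differentiable one_ne_zero
  have hd : DifferentiableAt ℝ (fun t => m (x, Function.update w k t)) s := by
    have hinner : HasDerivAt (fun t : ℝ => ((x, Function.update w k t) : ℝ × (Fin n → ℝ)))
        ((0 : ℝ), Pi.single k (1 : ℝ)) s :=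
      (hasDerivAt_const s x).prodMk (hasDerivAt_update w k s)
    exact ((hdm _).hasFDerivAt.comp_hasDerivAt s hinner).differentiableAt
  have hswap : (fun t => m (x, Function.update w k t))
      = fun t => m (x, Function.update (Function.update w k s) k t) := by
    funext t; rw [Function.update_idem]
  have hder : deriv (fun t => m (x, Function.update w k t)) s
      = f k (m (x, Function.update w k s)) := by
    have h2 := heq k x (Function.update w k s)
    rw [pdy, Function.update_self] at h2
    rw [hswap]
    exact h2
  rw [← hder]
  exact hd.hasDerivAt

theorem f_i_proportional {n : ℕ} (m : ℝ × (Fin n → ℝ) → ℝ) (f : Fin n → ℝ → ℝ)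
    (U : Set ℝ) (hU : IsOpen U) (hrange : Set.range m ⊆ U)
    (hm : ContDiff ℝ 1 m)
    (hmx : ∀ x y, pdx m x y ≠ 0)
    (hf : ∀ (i : Fin n), ∀ z ∈ U, DifferentiableAt ℝ (f i) z)
    (hf0 : ∀ (i : Fin n), ∀ z ∈ U, f i z ≠ 0)
    (heq : ∀ (i : Fin n) x y, pdy i m x y = f i (m (x, y)))
    (hro : IsOpen (Set.range m)) (hrc : IsConnected (Set.range m)) :
    ∀ i j : Fin n, ∃ c : ℝ, c ≠ 0 ∧ ∀ z ∈ Set.range m, f i z = c * f j z := by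
  intro i j
  rcases eq_or_ne i j with rfl | hij
  · exact ⟨1, one_ne_zero, fun z _ => (one_mul _).symm⟩
  set V := Set.range m with hV
  obtain ⟨z₀, hz₀⟩ := hrc.nonempty
  -- continuity of (f j)⁻¹ on U
  have hcj : ContinuousOn (fun t => (f j t)⁻¹) U := fun z hz =>
    (((hf j z hz).continuousAt).continuousWithinAt).inv₀ (hf0 j z hz)
  have hVU : V ⊆ U := hrange
  have hVord : Set.OrdConnected V := hrc.isPreconnected.ordConnected
  -- the primitive G of (f j)⁻¹ on V
  set G : ℝ → ℝ := fun z => ∫ t in z₀..z, (f j t)⁻¹ with hGdef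
  have hG : ∀ z ∈ V, HasDerivAt G (f j z)⁻¹ z := by
    intro z hz
    have hsub : Set.uIcc z₀ z ⊆ V := hVord.uIcc_subset hz₀ hz
    have hint : IntervalIntegrable (fun t => (f j t)⁻¹) MeasureTheory.volume z₀ z :=
      (hcj.mono (hsub.trans hVU)).intervalIntegrable
    have hmeas : StronglyMeasurableAtFilter (fun t => (f j t)⁻¹) (nhds z) MeasureTheory.volume :=
      ContinuousOn.stronglyMeasurableAtFilter hU hcj z (hVU hz)
    exact intervalIntegral.integral_hasDerivAt_right hint hmeas
      ((hcj z (hVU hz)).continuousAt (hU.mem_nhds (hVU hz)))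
  -- the ratio r = fᵢ/fⱼ
  set r : ℝ → ℝ := fun w => (f j w)⁻¹ * f i w with hrdef
  -- main pointwise claim: r constant along the j-slice through any point
  have key : ∀ x y t, r (m (x, Function.update y j t)) = r (m (x, y)) := by
    intro x y t
    set F : ℝ → ℝ → ℝ := fun s t => m (x, Function.update (Function.update y i s) j t) with hF
    have hmemF : ∀ s t, F s t ∈ V := fun s t => Set.mem_range_self _
    -- F s (y j) = m (x, update y i s)
    have hFyj : ∀ s, F s (y j) = m (x, Function.update y i s) := by
      intro s
      have : Function.update (Function.update y i s) j (y j) = Function.update y i s := by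
        rw [show y j = Function.update y i s j from (Function.update_of_ne (Ne.symm hij) s y).symm,
          Function.update_eq_self]
      rw [hF]; simp only [this]
    -- Step A : for each s, G (F s t) = G (F s (y j)) + (t - y j)
    have stepA : ∀ s t, G (F s t) = G (F s (y j)) + (t - y j) := by
      intro s t
      have hderiv : ∀ u : ℝ, HasDerivAt (fun t => G (F s t) - t) 0 u := by
        intro u
        have hin : HasDerivAt (fun t => F s t) (f j (F s u)) u :=
          sliceDeriv m f hm heq j x (Function.update y i s) u
        have hout : HasDerivAt G (f j (F s u))⁻¹ (F s u) := hG _ (hmemF s u)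
        have hcomp : HasDerivAt (fun t => G (F s t)) ((f j (F s u))⁻¹ * f j (F s u)) u :=
          hout.comp u hin
        have h1 : (f j (F s u))⁻¹ * f j (F s u) = 1 :=
          inv_mul_cancel₀ (hf0 j _ (hVU (hmemF s u)))
        have := hcomp.sub (hasDerivAt_id' u); rw [h1, sub_self] at this; exact this
      have hconst := is_const_of_deriv_eq_zero
        (fun u => (hderiv u).differentiableAt) (fun u => (hderiv u).deriv) t (y j)
      have : G (F s t) - t = G (F s (y j)) - y j := hconst
      linarith
    -- Step B: differentiate in s at s = y i
    have hupd_comm : ∀ s u, Function.update (Function.update y i s) j u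
        = Function.update (Function.update y j u) i s := fun s u =>
      Function.update_comm hij s u y
    have hAin : ∀ u, HasDerivAt (fun s => F s u) (f i (F (y i) u)) (y i) := by
      intro u
      have h := sliceDeriv m f hm heq i x (Function.update y j u) (y i)
      simp only [hF, hupd_comm]
      exact h
    have hGA : ∀ u, HasDerivAt (fun s => G (F s u)) ((f j (F (y i) u))⁻¹ * f i (F (y i) u)) (y i) :=
      fun u => by have := (hG _ (hmemF (y i) u)).comp (y i) (hAin u); exact this
    -- LHS and RHS of stepA as functions of s are equal, so derivatives agree
    have hfun : (fun s => G (F s t)) = fun s => G (F s (y j)) + (t - y j) := by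
      funext s; exact stepA s t
    have hR : HasDerivAt (fun s => G (F s (y j)) + (t - y j))
        ((f j (F (y i) (y j)))⁻¹ * f i (F (y i) (y j))) (y i) :=
      (hGA (y j)).add_const _
    have hL : HasDerivAt (fun s => G (F s (y j)) + (t - y j))
        ((f j (F (y i) t))⁻¹ * f i (F (y i) t)) (y i) := hfun ▸ hGA t
    have heqd := hL.unique hR
    -- F (y i) t = m (x, update y j t) and F (y i) (y j) = m (x, y)
    have h1 : F (y i) t = m (x, Function.update y j t) := by
      rw [hF]; simp [Function.update_eq_self]
    have h2 : F (y i) (y j) = m (x, y) := by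
      rw [hFyj]; simp [Function.update_eq_self]
    rw [h1, h2] at heqd
    simpa [hrdef] using heqd
  -- deduce deriv r = 0 on V
  have hrdiff : ∀ z ∈ V, DifferentiableAt ℝ r z := fun z hz =>
    (((hf j z (hVU hz)).inv (hf0 j z (hVU hz)))).mul (hf i z (hVU hz))
  have hderiv0 : ∀ z ∈ V, HasDerivAt r 0 z := by
    rintro z ⟨⟨x, y⟩, rfl⟩
    have hue : Function.update y j (y j) = y := Function.update_eq_self j y
    have hφ : HasDerivAt (fun t => m (x, Function.update y j t)) (f j (m (x, y))) (y j) := by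
      have h := sliceDeriv m f hm heq j x y (y j)
      rwa [hue] at h
    have hz : m (x, y) ∈ V := Set.mem_range_self _
    have hr : HasDerivAt r (deriv r (m (x, y))) (m (x, y)) :=
      (hrdiff _ hz).hasDerivAt
    have hr2 : HasDerivAt r (deriv r (m (x, y)))
        ((fun t => m (x, Function.update y j t)) (y j)) := by
      simp only [hue]; exact hr
    have hcomp : HasDerivAt (fun t => r (m (x, Function.update y j t)))
        (deriv r (m (x, y)) * f j (m (x, y))) (y j) := by have := hr2.comp (y j) hφ; exact this
    have hconst : (fun t => r (m (x, Function.update y j t))) = fun _ => r (m (x, y)) := by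
      funext t; exact key x y t
    have hzero : HasDerivAt (fun t => r (m (x, Function.update y j t))) 0 (y j) := by
      rw [hconst]; exact hasDerivAt_const _ _
    have := hcomp.unique hzero
    have hd0 : deriv r (m (x, y)) = 0 :=
      (mul_eq_zero.mp this).resolve_right (hf0 j _ (hVU hz))
    rw [← hd0]; exact hr
  -- r is constant on V (convex since connected in ℝ)
  have hVconv : Convex ℝ V := hVord.convex
  have hrconst : ∀ z ∈ V, r z = r z₀ := by
    intro z hz
    refine hVconv.is_const_of_fderivWithin_eq_zero
      (fun w hw => (hrdiff w hw).differentiableWithinAt) (fun w hw => ?_) hz hz₀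
    have h := (hderiv0 w hw).hasFDerivAt
    have h2 := h.hasFDerivWithinAt.fderivWithin (hro.uniqueDiffWithinAt hw)
    rw [h2]
    ext v
    simp
  refine ⟨r z₀, ?_, ?_⟩
  · rw [hrdef]
    exact mul_ne_zero (inv_ne_zero (hf0 j z₀ (hVU hz₀))) (hf0 i z₀ (hVU hz₀))
  · intro z hz
    have h := hrconst z hz
    have hj := hf0 j z (hVU hz)
    rw [← h]
    rw [hrdef]
    show f i z = (f j z)⁻¹ * f i z * f j z
    rw [mul_comm (f j z)⁻¹, inv_mul_cancel_right₀ hj]
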